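/- Let R be a ring, n a natural number, and suppose R is n-skew-Armendariz. Then R is a Baer ring if and only if A_n is a Baer ring. -/

import Mathlib

open Finsupp AddMonoidAlgebra Polynomial

/-- Base-`N` representations with digits `< N` are unique. -/
private lemma baseN_inj {N : ℕ} (hN : 0 < N) :
    ∀ (n : ℕ) (u v : Fin n → ℕ), (∀ i, u i < N) → (∀ i, v i < N) →
      (∑ i, u i * N ^ (i : ℕ)) = (∑ i, v i * N ^ (i : ℕ)) → u = v := by
  intro n
  induction n with
  | zero => intro u v _ _ _; funext i; exact i.elim0
  | succ n ih =>
    intro u v hu hv h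
    rw [Fin.sum_univ_succ, Fin.sum_univ_succ] at h
    have e : ∀ w : Fin (n + 1) → ℕ,
        (∑ i : Fin n, w i.succ * N ^ ((i.succ : Fin (n+1)) : ℕ))
          = (∑ i : Fin n, w i.succ * N ^ (i : ℕ)) * N := by
      intro w
      rw [Finset.sum_mul]
      refine Finset.sum_congr rfl fun i _ => ?_
      rw [Fin.val_succ, pow_succ, mul_assoc]
    rw [e u, e v] at h
    have h0 : u 0 = v 0 := by
      have := congrArg (· % N) h
      simpa [Nat.add_mul_mod_self_right, Nat.mod_eq_of_lt (hu 0),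
        Nat.mod_eq_of_lt (hv 0)] using this
    have hs : (∑ i : Fin n, u i.succ * N ^ (i : ℕ))
        = ∑ i : Fin n, v i.succ * N ^ (i : ℕ) := by
      rw [h0] at h
      exact Nat.eq_of_mul_eq_mul_right hN (Nat.add_left_cancel h)
    have := ih (fun i => u i.succ) (fun i => v i.succ)
      (fun i => hu i.succ) (fun i => hv i.succ) hs
    funext i
    refine Fin.cases h0 (fun j => ?_) i
    exact congrFun this j

/-- Weak Armendariz for `R[X]` implies full Armendariz. -/
private lemma poly_full {R : Type*} [Ring R]
    (hw : ∀ p q : Polynomial R, p * q = 0 → ∀ j, p.coeff 0 * q.coeff j = 0) :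
    ∀ (i : ℕ) (p q : Polynomial R), p * q = 0 → ∀ j, p.coeff i * q.coeff j = 0 := by
  intro i
  induction i with
  | zero => exact fun p q h j => hw p q h j
  | succ i ih =>
    intro p q h j
    have h0 : (Polynomial.C (p.coeff 0)) * q = 0 := by
      ext k
      simp [Polynomial.coeff_C_mul, hw p q h k]
    have h1 : (p - Polynomial.C (p.coeff 0)) * q = 0 := by
      rw [sub_mul, h, h0, sub_zero]
    obtain ⟨p', hp'⟩ : Polynomial.X ∣ (p - Polynomial.C (p.coeff 0)) := by
      rw [Polynomial.X_dvd_iff]; simp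
    have hq : p' * q = 0 := by
      have hXpq : Polynomial.X * (p' * q) = 0 := by rw [← mul_assoc, ← hp', h1]
      ext k
      have := congrArg (fun r => Polynomial.coeff r (k + 1)) hXpq
      simpa [Polynomial.coeff_X_mul] using this
    have hc : p.coeff (i + 1) = p'.coeff i := by
      have h2 : (p - Polynomial.C (p.coeff 0)).coeff (i + 1) = p.coeff (i + 1) := by
        simp
      rw [← h2, hp', Polynomial.coeff_X_mul]
    rw [hc]
    exact ih p' q hq j

/-- A skew-Armendariz ring (in the weak, constant-coefficient sense) satisfies the full
Armendariz condition for `AddMonoidAlgebra R (Fin n →₀ ℕ)`. -/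
private lemma full_armendariz {R : Type*} [Ring R] {n : ℕ}
    (hSA : ∀ f g : AddMonoidAlgebra R (Fin n →₀ ℕ), f * g = 0 →
      ∀ m : Fin n →₀ ℕ, f.coeff 0 * g.coeff m = 0) :
    ∀ f g : AddMonoidAlgebra R (Fin n →₀ ℕ), f * g = 0 →
      ∀ a b : Fin n →₀ ℕ, f.coeff a * g.coeff b = 0 := by
  rcases Nat.eq_zero_or_pos n with hn | hn
  · subst hn
    intro f g h a b
    have ha : a = 0 := by ext i; exact i.elim0
    rw [ha]
    exact hSA f g h b
  -- Step 1: weak Armendariz for `R[X]` via the embedding `X ↦ X i₀`.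
  have weakP : ∀ p q : Polynomial R, p * q = 0 → ∀ j, p.coeff 0 * q.coeff j = 0 := by
    intro p q h j
    set i₀ : Fin n := ⟨0, hn⟩
    set u : ℕ →+ (Fin n →₀ ℕ) := Finsupp.singleAddHom i₀ with hu
    have hui : Function.Injective u := Finsupp.single_injective i₀
    set Ψ : AddMonoidAlgebra R ℕ →+* AddMonoidAlgebra R (Fin n →₀ ℕ) :=
      AddMonoidAlgebra.mapDomainRingHom R u with hΨdef
    have hΨ : Ψ p.toFinsupp * Ψ q.toFinsupp = 0 := by
      rw [← map_mul, ← Polynomial.toFinsupp_mul, h, Polynomial.toFinsupp_zero, map_zero]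
    have key : ∀ (x : Polynomial R) (k : ℕ), (Ψ x.toFinsupp).coeff (u k) = x.coeff k := by
      intro x k
      have : (Finsupp.mapDomain u x.toFinsupp.coeff) (u k) = x.toFinsupp.coeff k :=
        Finsupp.mapDomain_apply hui x.toFinsupp.coeff k
      simpa [hΨdef, Polynomial.toFinsupp_apply] using this
    have := hSA _ _ hΨ (u j)
    have h0 : (Ψ p.toFinsupp).coeff 0 = p.coeff 0 := by
      have := key p 0
      rwa [map_zero] at this
    rw [h0, key q j] at this
    exact this
  have fullP := poly_full weakP
  -- Step 3: Kronecker substitution.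
  intro f g h a b
  classical
  by_cases hfa : f.coeff a = 0
  · rw [hfa, zero_mul]
  by_cases hgb : g.coeff b = 0
  · rw [hgb, mul_zero]
  have haf : a ∈ f.coeff.support := Finsupp.mem_support_iff.2 hfa
  have hbg : b ∈ g.coeff.support := Finsupp.mem_support_iff.2 hgb
  set D : Finset (Fin n →₀ ℕ) := f.coeff.support ∪ g.coeff.support with hD
  set N : ℕ := 1 + D.sup (fun m => Finset.univ.sup fun i => m i) with hNdef
  have hN : 0 < N := by omega
  have hbound : ∀ m ∈ D, ∀ i, m i < N := by
    intro m hm i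
    have h1 : m i ≤ Finset.univ.sup (fun i => m i) :=
      Finset.le_sup (Finset.mem_univ i)
    have h2 : Finset.univ.sup (fun i => m i) ≤ D.sup (fun m => Finset.univ.sup fun i => m i) :=
      Finset.le_sup (f := fun m : Fin n →₀ ℕ => Finset.univ.sup fun i => m i) hm
    omega
  set w : (Fin n →₀ ℕ) →+ ℕ :=
    Finsupp.liftAddHom (fun i => AddMonoidHom.mulRight (N ^ (i : ℕ))) with hwdef
  have hwval : ∀ m : Fin n →₀ ℕ, w m = ∑ i, m i * N ^ (i : ℕ) := by
    intro m
    rw [hwdef, Finsupp.liftAddHom_apply]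
    exact Finsupp.sum_fintype _ _ (fun i => by simp)
  have hinj : ∀ m ∈ D, ∀ m' ∈ D, w m = w m' → m = m' := by
    intro m hm m' hm' hww
    rw [hwval, hwval] at hww
    have := baseN_inj hN n (⇑m) (⇑m') (hbound m hm) (hbound m' hm') hww
    exact DFunLike.coe_injective this
  set Φ : AddMonoidAlgebra R (Fin n →₀ ℕ) →+* AddMonoidAlgebra R ℕ :=
    AddMonoidAlgebra.mapDomainRingHom R w with hΦdef
  have hΦ0 : Φ f * Φ g = 0 := by rw [← map_mul, h, map_zero]
  have key : ∀ (x : AddMonoidAlgebra R (Fin n →₀ ℕ)), x.coeff.support ⊆ D →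
      ∀ c ∈ D, (Φ x).coeff (w c) = x.coeff c := by
    intro x hx c hc
    have : Finsupp.mapDomain w x.coeff (w c) = x.coeff c := by
      refine Finsupp.mapDomain_apply' (↑D) x.coeff ?_ ?_ hc
      · exact_mod_cast hx
      · intro m hm m' hm' hww
        exact hinj m hm m' hm' hww
    simpa [hΦdef] using this
  have hpq : (⟨Φ f⟩ : Polynomial R) * (⟨Φ g⟩ : Polynomial R) = 0 := by
    rw [← Polynomial.ofFinsupp_mul, hΦ0, Polynomial.ofFinsupp_zero]
  have := fullP (w a) _ _ hpq (w b)
  rw [Polynomial.coeff_ofFinsupp, Polynomial.coeff_ofFinsupp] at this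
  rw [key f (by rw [hD]; exact Finset.subset_union_left) a (by rw [hD]; exact Finset.mem_union_left _ haf),
    key g (by rw [hD]; exact Finset.subset_union_right) b (by rw [hD]; exact Finset.mem_union_right _ hbg)] at this
  exact this

/-- A ring `T` is Baer if the right annihilator of every subset of `T` equals `eT`
for some idempotent `e ∈ T`. -/
def IsBaerRing (T : Type*) [Ring T] : Prop :=
  ∀ S : Set T, ∃ e : T, e * e = e ∧
    {x : T | ∀ s ∈ S, s * x = 0} = {x : T | e * x = x}

/-- If `R` is `n`-skew-Armendariz, then `R` is a Baer ring iff
`A_n = AddMonoidAlgebra R (Fin n →₀ ℕ)` is a Baer ring. -/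
theorem isBaer_iff_addMonoidAlgebra_of_nSkewArmendariz (R : Type*) [Ring R] (n : ℕ)
    (hSA : ∀ f g : AddMonoidAlgebra R (Fin n →₀ ℕ), f * g = 0 →
      ∀ m : Fin n →₀ ℕ, f.coeff 0 * g.coeff m = 0) :
    IsBaerRing R ↔ IsBaerRing (AddMonoidAlgebra R (Fin n →₀ ℕ)) := by
  have hFA := full_armendariz hSA
  constructor
  · -- R Baer → A_n Baer
    intro hR S
    classical
    set C : Set R := {r | ∃ f ∈ S, ∃ m, f.coeff m = r} with hC
    obtain ⟨e, he, hCset⟩ := hR C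
    refine ⟨AddMonoidAlgebra.single 0 e, ?_, ?_⟩
    · rw [AddMonoidAlgebra.single_mul_single, zero_add, he]
    · ext g
      simp only [Set.mem_setOf_eq]
      constructor
      · intro hg
        ext m
        rw [AddMonoidAlgebra.coeff_single_zero_mul]
        have hmem : g.coeff m ∈ {x : R | ∀ s ∈ C, s * x = 0} := by
          intro s hs
          obtain ⟨f, hf, m', rfl⟩ := hs
          exact hFA f g (hg f hf) m' m
        rw [hCset] at hmem
        exact hmem
      · intro hg f hf
        have hfe : f * AddMonoidAlgebra.single 0 e = 0 := by
          ext m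
          rw [AddMonoidAlgebra.coeff_mul_single_zero]
          have hemem : ∀ s ∈ C, s * e = 0 := by
            have : e ∈ {x : R | ∀ s ∈ C, s * x = 0} := by rw [hCset]; exact he
            exact this
          simp only [AddMonoidAlgebra.coeff_zero, Finsupp.coe_zero, Pi.zero_apply]
          exact hemem (f.coeff m) ⟨f, hf, m, rfl⟩
        calc f * g = f * (AddMonoidAlgebra.single 0 e * g) := by rw [hg]
          _ = (f * AddMonoidAlgebra.single 0 e) * g := by rw [mul_assoc]
          _ = 0 := by rw [hfe, zero_mul]
  · -- A_n Baer → R Baer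
    intro hA S
    classical
    obtain ⟨E, hE, hset⟩ := hA ((fun r => AddMonoidAlgebra.single (0 : Fin n →₀ ℕ) r) '' S)
    -- E is a constant, i.e. supported at 0
    have hEc : ∀ m : Fin n →₀ ℕ, m ≠ 0 → E.coeff m = 0 := by
      intro m hm
      have h1 : (E - 1) * E = 0 := by rw [sub_mul, hE, one_mul, sub_self]
      have := hSA (E - 1) E h1 m
      have hE0 : (E - 1).coeff 0 = E.coeff 0 - 1 := by
        rw [AddMonoidAlgebra.one_def, AddMonoidAlgebra.coeff_sub, Finsupp.sub_apply, AddMonoidAlgebra.coeff_single, Finsupp.single_eq_same]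
      rw [hE0, sub_mul, one_mul, sub_eq_zero] at this
      -- E 0 * E m = E m
      have h2 : E * (E - 1) = 0 := by rw [mul_sub, hE, mul_one, sub_self]
      have h3 := hSA E (E - 1) h2 m
      have hEm : (E - 1).coeff m = E.coeff m := by
        rw [AddMonoidAlgebra.one_def, AddMonoidAlgebra.coeff_sub, Finsupp.sub_apply, AddMonoidAlgebra.coeff_single,
          Finsupp.single_eq_of_ne' (Ne.symm hm), sub_zero]
      rw [hEm] at h3
      -- E 0 * E m = 0
      rw [← this, h3]
    set e : R := E.coeff 0 with hedef
    have hEeq : E = AddMonoidAlgebra.single 0 e := by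
      ext m
      by_cases hm : m = 0
      · subst hm; rw [AddMonoidAlgebra.coeff_single, Finsupp.single_eq_same]
      · rw [hEc m hm, AddMonoidAlgebra.coeff_single, Finsupp.single_eq_of_ne' (Ne.symm hm)]
    have hee : e * e = e := by
      have := congrArg (fun x => x.coeff 0) hE
      rw [hEeq] at this
      simpa [AddMonoidAlgebra.single_mul_single] using this
    refine ⟨e, hee, ?_⟩
    ext r
    simp only [Set.mem_setOf_eq]
    constructor
    · intro hr
      have hmem : AddMonoidAlgebra.single (0 : Fin n →₀ ℕ) r ∈
          {x : AddMonoidAlgebra R (Fin n →₀ ℕ) |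
            ∀ s ∈ (fun r => AddMonoidAlgebra.single (0 : Fin n →₀ ℕ) r) '' S, s * x = 0} := by
        intro s hs
        obtain ⟨s', hs', rfl⟩ := hs
        rw [AddMonoidAlgebra.single_mul_single, zero_add, hr s' hs']
        simp
      rw [hset] at hmem
      have := congrArg (fun x => x.coeff (0 : Fin n →₀ ℕ)) hmem
      rw [hEeq] at this
      simpa [AddMonoidAlgebra.single_mul_single] using this
    · intro hr s hs
      have hmem : AddMonoidAlgebra.single (0 : Fin n →₀ ℕ) r ∈
          {x : AddMonoidAlgebra R (Fin n →₀ ℕ) | E * x = x} := by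
        simp only [Set.mem_setOf_eq, hEeq, AddMonoidAlgebra.single_mul_single, zero_add, hr]
      rw [← hset] at hmem
      have := hmem (AddMonoidAlgebra.single 0 s) ⟨s, hs, rfl⟩
      rw [AddMonoidAlgebra.single_mul_single, zero_add] at this
      have := congrArg (fun x => x.coeff (0 : Fin n →₀ ℕ)) this
      simpa using this
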